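/- Let f₀ be a centrally symmetric probability density on ℝ^d, G a CDF with G(-x) = 1 - G(x), and w odd. Let X ~ G and Y ~ f₀ be independent. Define Z = Y if X ≤ w(Y) and Z = -Y otherwise. Then Z has density z ↦ 2 f₀(z) G(w(z)). -/

import Mathlib

open MeasureTheory ProbabilityTheory Set

/-- Stochastic representation (equation 5): with `f₀` centrally symmetric,
`G` a CDF with `G(-x) = 1 - G(x)`, `w` odd, `X ~ G` and `Y ~ f₀` independent,
the variable `Z = Y` if `X ≤ w(Y)`, `Z = -Y` otherwise, has density
`z ↦ 2 f₀(z) G(w(z))`. -/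
theorem stochastic_representation
    {Ω : Type*} [MeasurableSpace Ω] (P : Measure Ω) [IsProbabilityMeasure P]
    (d : ℕ) (f₀ : (Fin d → ℝ) → ℝ) (G : ℝ → ℝ) (w : (Fin d → ℝ) → ℝ)
    (X : Ω → ℝ) (Y : Ω → (Fin d → ℝ))
    (hf₀_meas : Measurable f₀) (hf₀_nonneg : ∀ z, 0 ≤ f₀ z)
    (hf₀_symm : ∀ z, f₀ (-z) = f₀ z)
    (hG_mono : Monotone G) (hG_symm : ∀ x, G (-x) = 1 - G x)
    (hG_cont : Continuous G)
    (hw_meas : Measurable w) (hw_odd : ∀ z, w (-z) = -w z)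
    (hX : Measurable X) (hY : Measurable Y)
    (hindep : IndepFun X Y P)
    (hXlaw : ∀ x : ℝ, (Measure.map X P) (Iic x) = ENNReal.ofReal (G x))
    (hYlaw : Measure.map Y P = volume.withDensity (fun z => ENNReal.ofReal (f₀ z))) :
    Measure.map (fun ω => if X ω ≤ w (Y ω) then Y ω else -Y ω) P =
      volume.withDensity (fun z => ENNReal.ofReal (2 * f₀ z * G (w z))) := by
  have hprobX : IsProbabilityMeasure (Measure.map X P) :=
    Measure.isProbabilityMeasure_map hX.aemeasurable
  have hprobY : IsProbabilityMeasure (Measure.map Y P) :=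
    Measure.isProbabilityMeasure_map hY.aemeasurable
  have hG1 : ∀ x, G x ≤ 1 := by
    intro x
    by_contra h
    push_neg at h
    have h2 : (Measure.map X P) (Iic x) ≤ 1 := prob_le_one
    rw [hXlaw x] at h2
    have := ENNReal.ofReal_le_one.mp h2
    linarith
  have hG0 : ∀ x, 0 ≤ G x := by
    intro x
    have h1 := hG_symm (-x)
    rw [neg_neg] at h1
    have := hG1 (-x)
    linarith
  have hmle : MeasurableSet {ω | X ω ≤ w (Y ω)} :=
    measurableSet_le hX (hw_meas.comp hY)
  have hZ : Measurable (fun ω => if X ω ≤ w (Y ω) then Y ω else -Y ω) :=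
    Measurable.ite hmle hY hY.neg
  have hpair : Measurable (fun ω => (X ω, Y ω)) := hX.prodMk hY
  have hmap : Measure.map (fun ω => (X ω, Y ω)) P
      = (Measure.map X P).prod (Measure.map Y P) :=
    (indepFun_iff_map_prod_eq_prod_map_map hX.aemeasurable hY.aemeasurable).mp hindep
  have hmeasG : Measurable fun y : Fin d → ℝ => ENNReal.ofReal (G (w y)) :=
    ((hG_cont.measurable).comp hw_meas).ennreal_ofReal
  have key : ∀ g : (Fin d → ℝ) → ENNReal, Measurable g → ∀ t : Set (Fin d → ℝ),
      MeasurableSet t →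
      ∫⁻ y in t, g y ∂(Measure.map Y P)
        = ∫⁻ y in t, ENNReal.ofReal (f₀ y) * g y := by
    intro g hg t ht
    rw [hYlaw, restrict_withDensity ht,
      lintegral_withDensity_eq_lintegral_mul _ hf₀_meas.ennreal_ofReal hg]
    rfl
  refine Measure.ext fun s hs => ?_
  rw [Measure.map_apply hZ hs, withDensity_apply _ hs]
  set S1 : Set (ℝ × (Fin d → ℝ)) := {p | p.1 ≤ w p.2 ∧ p.2 ∈ s} with hS1
  set S2 : Set (ℝ × (Fin d → ℝ)) := {p | ¬ p.1 ≤ w p.2 ∧ -p.2 ∈ s} with hS2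
  have hMS1 : MeasurableSet S1 :=
    (measurableSet_le measurable_fst (hw_meas.comp measurable_snd)).inter
      (measurable_snd hs)
  have hMS2 : MeasurableSet S2 :=
    ((measurableSet_le measurable_fst (hw_meas.comp measurable_snd)).compl).inter
      (measurable_snd.neg hs)
  have hsplit : (fun ω => if X ω ≤ w (Y ω) then Y ω else -Y ω) ⁻¹' s
      = (fun ω => (X ω, Y ω)) ⁻¹' S1 ∪ (fun ω => (X ω, Y ω)) ⁻¹' S2 := by
    ext ω
    by_cases h : X ω ≤ w (Y ω)
    · simp [S1, S2, h]
    · simp [S1, S2, h, not_le.mp h]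
  have hdisj : Disjoint ((fun ω => (X ω, Y ω)) ⁻¹' S1)
      ((fun ω => (X ω, Y ω)) ⁻¹' S2) := by
    apply Set.disjoint_left.mpr
    rintro ω ⟨h1, _⟩ ⟨h2, _⟩
    exact h2 h1
  rw [hsplit, measure_union hdisj (hpair hMS2),
    ← Measure.map_apply hpair hMS1, ← Measure.map_apply hpair hMS2, hmap]
  have h1 : ((Measure.map X P).prod (Measure.map Y P)) S1
      = ∫⁻ y in s, ENNReal.ofReal (G (w y)) ∂(Measure.map Y P) := by
    rw [Measure.prod_apply_symm hMS1, ← lintegral_indicator hs]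
    refine lintegral_congr fun y => ?_
    by_cases hy : y ∈ s
    · have hpre : (fun x : ℝ => (x, y)) ⁻¹' S1 = Iic (w y) := by
        ext x; simp [S1, hy]
      rw [hpre, hXlaw, indicator_of_mem hy]
    · have hpre : (fun x : ℝ => (x, y)) ⁻¹' S1 = ∅ := by
        ext x; simp [S1, hy]
      rw [hpre, indicator_of_notMem hy]; simp
  have h2 : ((Measure.map X P).prod (Measure.map Y P)) S2
      = ∫⁻ y in (fun y : Fin d → ℝ => -y) ⁻¹' s,
          (1 - ENNReal.ofReal (G (w y))) ∂(Measure.map Y P) := by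
    rw [Measure.prod_apply_symm hMS2, ← lintegral_indicator (measurable_neg hs)]
    refine lintegral_congr fun y => ?_
    by_cases hy : -y ∈ s
    · have hpre : (fun x : ℝ => (x, y)) ⁻¹' S2 = (Iic (w y))ᶜ := by
        ext x; simp [S2, hy]
      rw [hpre, measure_compl measurableSet_Iic (measure_ne_top _ _), hXlaw,
        measure_univ, indicator_of_mem (by simpa using hy)]
    · have hpre : (fun x : ℝ => (x, y)) ⁻¹' S2 = ∅ := by
        ext x; simp [S2, hy]
      rw [hpre, indicator_of_notMem (by simpa using hy)]; simp
  have hneg_mp : MeasurePreserving (fun y : Fin d → ℝ => -y) volume volume :=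
    Measure.measurePreserving_neg volume
  have hneg_emb : MeasurableEmbedding (fun y : Fin d → ℝ => -y) :=
    (Homeomorph.neg (Fin d → ℝ)).measurableEmbedding
  have hcov : ∫⁻ y in (fun y : Fin d → ℝ => -y) ⁻¹' s,
        ENNReal.ofReal (f₀ y) * (1 - ENNReal.ofReal (G (w y))) ∂volume
      = ∫⁻ y in s,
        ENNReal.ofReal (f₀ (-y)) * (1 - ENNReal.ofReal (G (w (-y)))) ∂volume := by
    have := hneg_mp.setLIntegral_comp_preimage_emb hneg_emb
      (fun y => ENNReal.ofReal (f₀ (-y)) * (1 - ENNReal.ofReal (G (w (-y))))) s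
    simpa [neg_neg] using this
  have hsimp : ∀ y : Fin d → ℝ,
      ENNReal.ofReal (f₀ (-y)) * (1 - ENNReal.ofReal (G (w (-y))))
        = ENNReal.ofReal (f₀ y) * ENNReal.ofReal (G (w y)) := by
    intro y
    rw [hf₀_symm, hw_odd, hG_symm]
    congr 1
    rw [ENNReal.ofReal_sub _ (hG0 _), ENNReal.ofReal_one,
      ENNReal.sub_sub_cancel ENNReal.one_ne_top (ENNReal.ofReal_le_one.mpr (hG1 _))]
  rw [h1, h2, key _ hmeasG s hs,
    key (fun y => 1 - ENNReal.ofReal (G (w y))) (measurable_const.sub hmeasG)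
      ((fun y : Fin d → ℝ => -y) ⁻¹' s) (measurable_neg hs), hcov]
  simp_rw [hsimp]
  rw [← lintegral_add_left (f := fun y => ENNReal.ofReal (f₀ y) * ENNReal.ofReal (G (w y)))
    (hf₀_meas.ennreal_ofReal.mul hmeasG)]
  refine lintegral_congr fun y => ?_
  rw [← ENNReal.ofReal_mul (hf₀_nonneg y),
    ← ENNReal.ofReal_add (mul_nonneg (hf₀_nonneg y) (hG0 _))
      (mul_nonneg (hf₀_nonneg y) (hG0 _))]
  congr 1
  ring
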